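/- Let V be a π-graded complex vector space of finite type with inner product ω and dual map σ, and let Ř(u) be an R-matrix on V (satisfying the Yang–Baxter equation and the inversion relation Ř(u)Ř(−u) = Id) that is crossing symmetric with crossing parameter λ and meromorphic function α. Then Ř is rotationally invariant; more precisely, its rotation by 90° satisfies Ř^{*₁}(u) = α(−u)·Ř(u) for generic u ∈ ℂ. -/
import Mathlib


/-!
STATEMENT 1: A crossing symmetric R-matrix on a π-graded vector space of finite type
(with inner product ω and dual map σ) is rotationally invariant:
Ř^{*₁}(u) = α(−u)·Ř(u) for generic u.

π-graded vector spaces of finite type are encoded by a finite basis index type ι with a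
degree map deg : ι → Arr C assigning to each basis vector an arrow of the finite groupoid.
Operators are encoded by their matrices in this graded basis; the π-grading of an operator
is the condition that its matrix entries vanish except on commutative squares.
-/

open CategoryTheory
open scoped BigOperators

namespace Stmt1

variable {C : Type} [Groupoid C] [Fintype C] [DecidableEq C]
  [∀ a b : C, Fintype (a ⟶ b)] [∀ a b : C, DecidableEq (a ⟶ b)]

/-- The set of arrows of the groupoid `C`. -/
abbrev Arr (C : Type) [Groupoid C] := Σ a b : C, a ⟶ b

def src (α : Arr C) : C := α.1
def tgt (α : Arr C) : C := α.2.1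
/-- inverse arrow -/
def ainv (α : Arr C) : Arr C := ⟨α.2.1, α.1, Groupoid.inv α.2.2⟩
/-- composition of composable arrows -/
def acomp (α β : Arr C) (h : tgt α = src β) : Arr C :=
  ⟨src α, tgt β, α.2.2 ≫ eqToHom h ≫ β.2.2⟩

/-- `IsSquare i j k l` : the arrows `i,j` (vertically composable) and `k,l` (vertically
composable) form a commutative square, i.e. `j∘i = l∘k` with matching endpoints. -/
def IsSquare (i j k l : Arr C) : Prop :=
  ∃ (h₁ : tgt i = src j) (h₂ : tgt k = src l),
    src i = src k ∧ tgt j = tgt l ∧ acomp i j h₁ = acomp k l h₂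

variable {ι : Type} [Fintype ι] [DecidableEq ι]

/-- A matrix on `V ⊗ V` is a π-graded morphism iff its entries are supported on
commutative squares.  Convention: `R p q` is the matrix element mapping the component
`V_{deg q.1} ⊗ V_{deg q.2}` to `V_{deg p.1} ⊗ V_{deg p.2}`. -/
def GradedR (deg : ι → Arr C) (R : Matrix (ι × ι) (ι × ι) ℂ) : Prop :=
  ∀ p q, R p q ≠ 0 → IsSquare (deg q.1) (deg q.2) (deg p.1) (deg p.2)

/-- R acting on the factors 1,2 of a threefold tensor product. -/
noncomputable def M12 (R : Matrix (ι × ι) (ι × ι) ℂ) :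
    Matrix (ι × ι × ι) (ι × ι × ι) ℂ :=
  fun p q => R (p.1, p.2.1) (q.1, q.2.1) * (if p.2.2 = q.2.2 then 1 else 0)

/-- R acting on the factors 2,3 of a threefold tensor product. -/
noncomputable def M23 (R : Matrix (ι × ι) (ι × ι) ℂ) :
    Matrix (ι × ι × ι) (ι × ι × ι) ℂ :=
  fun p q => (if p.1 = q.1 then 1 else 0) * R (p.2.1, p.2.2) (q.2.1, q.2.2)

/-- the inner product ω contracting the factors 2,3 of a threefold tensor product. -/
noncomputable def Om23 (ω : ι → ι → ℂ) : Matrix ι (ι × ι × ι) ℂ :=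
  fun a q => (if a = q.1 then 1 else 0) * ω q.2.1 q.2.2

/-- the inner product ω contracting the factors 1,2 of a threefold tensor product. -/
noncomputable def Om12 (ω : ι → ι → ℂ) : Matrix ι (ι × ι × ι) ℂ :=
  fun a q => ω q.1 q.2.1 * (if a = q.2.2 then 1 else 0)

/-- the dual map σ inserted in the factors 1,2. -/
noncomputable def Sg12 (σ : ι → ι → ℂ) : Matrix (ι × ι × ι) ι ℂ :=
  fun p a => σ p.1 p.2.1 * (if p.2.2 = a then 1 else 0)

/-- the dual map σ inserted in the factors 2,3. -/
noncomputable def Sg23 (σ : ι → ι → ℂ) : Matrix (ι × ι × ι) ι ℂ :=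
  fun p a => (if p.1 = a then 1 else 0) * σ p.2.1 p.2.2

/-- Rotation by 90°:  Ř^{*₁}(u) = (id⊗id⊗ω)(id⊗Ř(λ−u)⊗id)(σ⊗id⊗id), i.e.
`ω^{(23)} Ř^{(12)}(λ−u) σ^{(01)}` on four tensor slots `0,1,2,3`. -/
noncomputable def rot90 (ω σ : ι → ι → ℂ) (Rm : ℂ → Matrix (ι × ι) (ι × ι) ℂ)
    (lam u : ℂ) : Matrix (ι × ι) (ι × ι) ℂ :=
  fun p q => ∑ b : ι, ∑ m : ι, σ p.1 b * Rm (lam - u) (p.2, m) (b, q.1) * ω m q.2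

lemma M12_mul (A B : Matrix (ι × ι) (ι × ι) ℂ) :
    M12 A * M12 B = M12 (A * B) := by
  ext p q
  simp only [Matrix.mul_apply, M12, Fintype.sum_prod_type]
  simp [Finset.mul_sum, Finset.sum_mul, mul_ite, ite_mul, mul_comm, mul_left_comm]

lemma M12_one : M12 (1 : Matrix (ι × ι) (ι × ι) ℂ) = 1 := by
  ext p q
  simp only [M12, Matrix.one_apply, Prod.ext_iff]
  by_cases h1 : p.1 = q.1 <;> by_cases h2 : p.2.1 = q.2.1 <;>
    by_cases h3 : p.2.2 = q.2.2 <;> simp [h1, h2, h3]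

/-- Let `V` be a π-graded complex vector space of finite type with inner
product `ω` and dual map `σ`, and let `Ř(u)` be an R-matrix on `V` (a meromorphic family of
π-graded endomorphisms of `V⊗V` satisfying the Yang–Baxter equation and the inversion
relation for generic `u`) which is crossing symmetric with crossing parameter `λ` and
meromorphic function `α`.  Then `Ř` is rotationally invariant:
`Ř^{*₁}(u) = α(−u)·Ř(u)` for generic `u`. -/
theorem crossing_symmetric_implies_rotationally_invariant
    (deg : ι → Arr C) (Rm : ℂ → Matrix (ι × ι) (ι × ι) ℂ)
    (ω σ : ι → ι → ℂ) (lam : ℂ) (α : ℂ → ℂ)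
    -- the entries of `Ř` and the function `α` are meromorphic
    (hMero : ∀ p q, MeromorphicOn (fun u => Rm u p q) Set.univ)
    (hαMero : MeromorphicOn α Set.univ)
    -- each `Ř(u)` is a morphism of π-graded vector spaces
    (hRgr : ∀ u, GradedR deg (Rm u))
    -- ω is an inner product: a π-graded morphism `V⊗V → 𝟏` (supported on pairs (i,i⁻¹)),
    -- nondegenerate, with dual map σ
    (hωgr : ∀ a b, ω a b ≠ 0 → deg b = ainv (deg a))
    (hσgr : ∀ a b, σ a b ≠ 0 → deg b = ainv (deg a))
    (hzig1 : ∀ a c, (∑ b, σ a b * ω b c) = if a = c then (1 : ℂ) else 0)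
    (hzig2 : ∀ a c, (∑ b, ω a b * σ b c) = if a = c then (1 : ℂ) else 0)
    -- exceptional set of non-generic parameters
    (E : Set ℂ) (hE : E.Countable)
    -- Yang–Baxter equation for generic parameters
    (hYBE : ∀ u v : ℂ, u ∉ E → v ∉ E → u - v ∉ E →
      M23 (Rm (u - v)) * M12 (Rm u) * M23 (Rm v)
        = M12 (Rm v) * M23 (Rm u) * M12 (Rm (u - v)))
    -- inversion relation Ř(u)Ř(−u) = Id
    (hinv : ∀ u : ℂ, u ∉ E → -u ∉ E → Rm u * Rm (-u) = 1)
    -- crossing symmetry with parameter λ and function α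
    (hcross1 : ∀ u : ℂ, u ∉ E → u + lam ∉ E →
      Om23 ω * M12 (Rm (u + lam)) * M23 (Rm u) = α u • Om12 ω)
    (hcross2 : ∀ u : ℂ, u ∉ E → u + lam ∉ E →
      M12 (Rm u) * M23 (Rm (u + lam)) * Sg12 σ = α u • Sg23 σ) :
    -- conclusion: rotational invariance, Ř^{*₁}(u) = α(−u)·Ř(u) for generic u
    ∃ E' : Set ℂ, E'.Countable ∧
      ∀ u ∉ E', rot90 ω σ Rm lam u = α (-u) • Rm u := by
  refine ⟨E ∪ Neg.neg ⁻¹' E ∪ (fun u => lam - u) ⁻¹' E,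
    ((hE.union (hE.preimage neg_injective)).union
      (hE.preimage (fun a b h => by simpa using sub_right_injective h))), ?_⟩
  intro u hu
  simp only [Set.mem_union, Set.mem_preimage, not_or] at hu
  obtain ⟨⟨hu1, hu2⟩, hu3⟩ := hu
  -- the key matrix identity obtained from crossing symmetry and inversion
  have h2 := hcross2 (-u) hu2 (by rwa [neg_add_eq_sub])
  rw [neg_add_eq_sub] at h2
  have hstar : M23 (Rm (lam - u)) * Sg12 σ = α (-u) • (M12 (Rm u) * Sg23 σ) := by
    calc M23 (Rm (lam - u)) * Sg12 σ
        = M12 (Rm u * Rm (-u)) * (M23 (Rm (lam - u)) * Sg12 σ) := by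
          rw [hinv u hu1 hu2, M12_one, Matrix.one_mul]
      _ = M12 (Rm u) * (M12 (Rm (-u)) * M23 (Rm (lam - u)) * Sg12 σ) := by
          rw [← M12_mul]; simp only [Matrix.mul_assoc]
      _ = M12 (Rm u) * (α (-u) • Sg23 σ) := by rw [h2]
      _ = α (-u) • (M12 (Rm u) * Sg23 σ) := (Matrix.mul_smul _ _ _)
  have key : ∀ p1 p2 m c : ι,
      (∑ b, σ p1 b * Rm (lam - u) (p2, m) (b, c))
        = α (-u) * ∑ d, Rm u (p1, p2) (c, d) * σ d m := by
    intro p1 p2 m c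
    have h := congrFun (congrFun hstar (p1, p2, m)) c
    simp [Matrix.mul_apply, M23, M12, Sg12, Sg23, Matrix.smul_apply,
      Fintype.sum_prod_type, ite_mul, mul_ite,
      Finset.sum_ite_eq, Finset.sum_ite_eq', Finset.mul_sum] at h
    simpa [Finset.mul_sum, mul_comm, mul_left_comm] using h
  ext p q
  obtain ⟨p1, p2⟩ := p
  obtain ⟨q1, q2⟩ := q
  have : rot90 ω σ Rm lam u (p1, p2) (q1, q2)
      = ∑ m : ι, (∑ b, σ p1 b * Rm (lam - u) (p2, m) (b, q1)) * ω m q2 := by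
    rw [rot90, Finset.sum_comm]
    congr 1; ext m
    rw [Finset.sum_mul]
  rw [Matrix.smul_apply, smul_eq_mul, this]
  calc ∑ m : ι, (∑ b, σ p1 b * Rm (lam - u) (p2, m) (b, q1)) * ω m q2
      = ∑ m : ι, (α (-u) * ∑ d, Rm u (p1, p2) (q1, d) * σ d m) * ω m q2 :=
        Finset.sum_congr rfl fun m _ => by rw [key]
    _ = α (-u) * ∑ d, Rm u (p1, p2) (q1, d) * ∑ m, σ d m * ω m q2 := by
        simp only [Finset.mul_sum, Finset.sum_mul]
        rw [Finset.sum_comm]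
        exact Finset.sum_congr rfl fun d _ => Finset.sum_congr rfl fun m _ => by ring
    _ = α (-u) * Rm u (p1, p2) (q1, q2) := by
        simp [hzig1, mul_ite, Finset.sum_ite_eq']
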